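/- Let ε ∈ (0,1], let f₂ : ℝ×[0,1] → ℝ be continuous, and let ω̂₁, ψ̂_L, ψ̂_R : ℝ×[0,1] → ℝ be C¹ with bounded values and bounded z-derivatives. Define ω̃₁(x,z) = ω̂₁(x,z) + (−f₂(x,0) + ε ∂_z ω̂₁(x,0)) ε^{−1/2} e^{−z/√ε} + z² e^{−z/√ε} ψ̂_L(x,z) + (f₂(x,1) − ε ∂_z ω̂₁(x,1)) ε^{−1/2} e^{−(1−z)/√ε} + (1−z)² e^{−(1−z)/√ε} ψ̂_R(x,z). Then there is a constant κ > 0, depending only on the sup norms of f₂, ∂_z ω̂₁, ψ̂_R, ψ̂_L, ∂_z ψ̂_R and ∂_z ψ̂_L (but not on ε), such that for all x: |∂_z ω̃₁(x,0) − f₂(x,0)/ε| ≤ κ ε^{−1} e^{−1/√ε} and |∂_z ω̃₁(x,1) − f₂(x,1)/ε| ≤ κ ε^{−1} e^{−1/√ε}; i.e., the sl-PINN prediction satisfies the Neumann boundary conditions ∂_z ω₁ = f₂/ε at z = 0, 1 up to an exponentially small (in ε) error. -/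

import Mathlib

/-- The sl-PINN prediction for the vorticity component `ω₁^ε`:
`ω̃₁(x,z) = ω̂₁(x,z) + (−f₂(x,0) + ε ∂_z ω̂₁(x,0)) ε^{−1/2} e^{−z/√ε}
  + z² e^{−z/√ε} ψ̂_L(x,z)
  + (f₂(x,1) − ε ∂_z ω̂₁(x,1)) ε^{−1/2} e^{−(1−z)/√ε}
  + (1−z)² e^{−(1−z)/√ε} ψ̂_R(x,z)`. -/
noncomputable def slPinnW1 (ε : ℝ) (f₂ what psiL psiR : ℝ → ℝ → ℝ) (x z : ℝ) : ℝ :=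
  what x z
    + (-(f₂ x 0) + ε * deriv (fun z' => what x z') 0) * ε ^ (-(1:ℝ)/2)
        * Real.exp (-z / Real.sqrt ε)
    + z ^ 2 * Real.exp (-z / Real.sqrt ε) * psiL x z
    + (f₂ x 1 - ε * deriv (fun z' => what x z') 1) * ε ^ (-(1:ℝ)/2)
        * Real.exp (-(1 - z) / Real.sqrt ε)
    + (1 - z) ^ 2 * Real.exp (-(1 - z) / Real.sqrt ε) * psiR x z

lemma keyDeriv (ε : ℝ) (f₂ what psiL psiR : ℝ → ℝ → ℝ) (x : ℝ)
    (hwd : Differentiable ℝ (fun z => what x z))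
    (hLd : Differentiable ℝ (fun z => psiL x z))
    (hRd : Differentiable ℝ (fun z => psiR x z)) (z₀ : ℝ) :
    HasDerivAt (fun z => slPinnW1 ε f₂ what psiL psiR x z)
      (deriv (fun z' => what x z') z₀
        + (-(f₂ x 0) + ε * deriv (fun z' => what x z') 0) * ε ^ (-(1:ℝ)/2)
            * (Real.exp (-z₀ / Real.sqrt ε) * (-1 / Real.sqrt ε))
        + (((2:ℝ) * z₀ * Real.exp (-z₀ / Real.sqrt ε)
              + z₀ ^ 2 * (Real.exp (-z₀ / Real.sqrt ε) * (-1 / Real.sqrt ε))) * psiL x z₀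
            + z₀ ^ 2 * Real.exp (-z₀ / Real.sqrt ε) * deriv (fun z' => psiL x z') z₀)
        + (f₂ x 1 - ε * deriv (fun z' => what x z') 1) * ε ^ (-(1:ℝ)/2)
            * (Real.exp (-(1 - z₀) / Real.sqrt ε) * (1 / Real.sqrt ε))
        + (((-(2 * (1 - z₀))) * Real.exp (-(1 - z₀) / Real.sqrt ε)
              + (1 - z₀) ^ 2 * (Real.exp (-(1 - z₀) / Real.sqrt ε) * (1 / Real.sqrt ε))) * psiR x z₀
            + (1 - z₀) ^ 2 * Real.exp (-(1 - z₀) / Real.sqrt ε) * deriv (fun z' => psiR x z') z₀))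
      z₀ := by
  have h1 : HasDerivAt (fun z => what x z) (deriv (fun z' => what x z') z₀) z₀ :=
    (hwd z₀).hasDerivAt
  have hψL : HasDerivAt (fun z => psiL x z) (deriv (fun z' => psiL x z') z₀) z₀ :=
    (hLd z₀).hasDerivAt
  have hψR : HasDerivAt (fun z => psiR x z) (deriv (fun z' => psiR x z') z₀) z₀ :=
    (hRd z₀).hasDerivAt
  have hlinL : HasDerivAt (fun z : ℝ => -z / Real.sqrt ε) (-1 / Real.sqrt ε) z₀ :=
    (hasDerivAt_id z₀).neg.div_const _
  have hE := hlinL.exp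
  have h1mz : HasDerivAt (fun z : ℝ => 1 - z) (-1) z₀ := by
    simpa using (hasDerivAt_id z₀).const_sub 1
  have hlinR : HasDerivAt (fun z : ℝ => -(1 - z) / Real.sqrt ε) (1 / Real.sqrt ε) z₀ := by
    simpa using h1mz.neg.div_const (Real.sqrt ε)
  have hF := hlinR.exp
  have hz2 : HasDerivAt (fun z : ℝ => z ^ 2) ((2:ℝ) * z₀) z₀ := by
    simpa using hasDerivAt_pow 2 z₀
  have h1mz2 : HasDerivAt (fun z : ℝ => (1 - z) ^ 2) (-(2 * (1 - z₀))) z₀ := by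
    refine (h1mz.pow 2).congr_deriv ?_
    push_cast
    norm_num
  unfold slPinnW1
  exact ((((h1.add (hE.const_mul _)).add ((hz2.mul hE).mul hψL)).add
    (hF.const_mul _)).add ((h1mz2.mul hF).mul hψR))

/-- abstract bound -/
lemma absBound (ε s a b c d Mf Mw M M' t : ℝ) (hε : 0 < ε) (hε1 : ε ≤ 1)
    (hεs : ε ≤ s) (hs0 : 0 < s)
    (ha : |a| ≤ Mf) (hb : |b| ≤ Mw) (hc : |c| ≤ M) (hd : |d| ≤ M')
    (ht : |t| ≤ 2 + s⁻¹) :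
    |(a - ε * b) * ε⁻¹ + t * c + d| ≤ (Mf + Mw + 3 * M + M') * ε⁻¹ := by
  have hM : 0 ≤ M := (abs_nonneg c).trans hc
  have hM' : 0 ≤ M' := (abs_nonneg d).trans hd
  have hεi : 0 < ε⁻¹ := inv_pos.mpr hε
  have h1ε : (1:ℝ) ≤ ε⁻¹ := one_le_inv_iff₀.mpr ⟨hε, hε1⟩
  have hsi : s⁻¹ ≤ ε⁻¹ := inv_anti₀ hε hεs
  have h1 : |(a - ε * b) * ε⁻¹| ≤ (Mf + Mw) * ε⁻¹ := by
    rw [abs_mul, abs_of_pos hεi]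
    have : |a - ε * b| ≤ Mf + Mw := by
      calc |a - ε * b| ≤ |a| + |ε * b| := abs_sub _ _
        _ ≤ Mf + Mw := by
            rw [abs_mul, abs_of_pos hε]
            have : ε * |b| ≤ 1 * Mw := by
              apply mul_le_mul hε1 hb (abs_nonneg b) zero_le_one
            nlinarith
    nlinarith
  have h2 : |t * c| ≤ 3 * M * ε⁻¹ := by
    rw [abs_mul]
    calc |t| * |c| ≤ (2 + s⁻¹) * M := mul_le_mul ht hc (abs_nonneg c) (by positivity)
      _ ≤ 3 * M * ε⁻¹ := by nlinarith
  have h3 : |d| ≤ M' * ε⁻¹ := by nlinarith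
  calc |(a - ε * b) * ε⁻¹ + t * c + d|
      ≤ |(a - ε * b) * ε⁻¹ + t * c| + |d| := abs_add_le _ _
    _ ≤ |(a - ε * b) * ε⁻¹| + |t * c| + |d| := by
        have := abs_add_le ((a - ε * b) * ε⁻¹) (t * c); linarith
    _ ≤ (Mf + Mw + 3 * M + M') * ε⁻¹ := by nlinarith

/-- For continuous `f₂` and `C¹` network outputs `ω̂₁, ψ̂_L, ψ̂_R` with
bounded values and bounded `z`-derivatives (bounds `Mf, Mw, ML, MR, ML', MR'`), there is a
constant `κ > 0` depending only on these bounds (not on `ε`) such that for all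
`ε ∈ (0,1]` and all `x`,
`|∂_z ω̃₁(x,0) − f₂(x,0)/ε| ≤ κ ε⁻¹ e^{−1/√ε}` and
`|∂_z ω̃₁(x,1) − f₂(x,1)/ε| ≤ κ ε⁻¹ e^{−1/√ε}`. -/
theorem statement16
    (f₂ what psiL psiR : ℝ → ℝ → ℝ)
    (hf₂ : Continuous (fun p : ℝ × ℝ => f₂ p.1 p.2))
    (hw : ContDiff ℝ 1 (fun p : ℝ × ℝ => what p.1 p.2))
    (hpsiL : ContDiff ℝ 1 (fun p : ℝ × ℝ => psiL p.1 p.2))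
    (hpsiR : ContDiff ℝ 1 (fun p : ℝ × ℝ => psiR p.1 p.2))
    (Mf Mw ML MR ML' MR' : ℝ)
    (hMf : ∀ x : ℝ, ∀ z ∈ Set.Icc (0:ℝ) 1, |f₂ x z| ≤ Mf)
    (hMw : ∀ x : ℝ, ∀ z ∈ Set.Icc (0:ℝ) 1, |deriv (fun z' => what x z') z| ≤ Mw)
    (hML : ∀ x : ℝ, ∀ z ∈ Set.Icc (0:ℝ) 1, |psiL x z| ≤ ML)
    (hMR : ∀ x : ℝ, ∀ z ∈ Set.Icc (0:ℝ) 1, |psiR x z| ≤ MR)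
    (hML' : ∀ x : ℝ, ∀ z ∈ Set.Icc (0:ℝ) 1, |deriv (fun z' => psiL x z') z| ≤ ML')
    (hMR' : ∀ x : ℝ, ∀ z ∈ Set.Icc (0:ℝ) 1, |deriv (fun z' => psiR x z') z| ≤ MR') :
    ∃ κ > 0, ∀ ε ∈ Set.Ioc (0:ℝ) 1, ∀ x : ℝ,
      |deriv (fun z => slPinnW1 ε f₂ what psiL psiR x z) 0 - f₂ x 0 / ε|
        ≤ κ * ε⁻¹ * Real.exp (-1 / Real.sqrt ε)
      ∧ |deriv (fun z => slPinnW1 ε f₂ what psiL psiR x z) 1 - f₂ x 1 / ε|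
        ≤ κ * ε⁻¹ * Real.exp (-1 / Real.sqrt ε) := by
  have h01 : (0:ℝ) ∈ Set.Icc (0:ℝ) 1 := by norm_num
  have h11 : (1:ℝ) ∈ Set.Icc (0:ℝ) 1 := by norm_num
  have hMf0 : 0 ≤ Mf := (abs_nonneg _).trans (hMf 0 0 h01)
  have hMw0 : 0 ≤ Mw := (abs_nonneg _).trans (hMw 0 0 h01)
  have hML0 : 0 ≤ ML := (abs_nonneg _).trans (hML 0 0 h01)
  have hMR0 : 0 ≤ MR := (abs_nonneg _).trans (hMR 0 0 h01)
  have hML'0 : 0 ≤ ML' := (abs_nonneg _).trans (hML' 0 0 h01)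
  have hMR'0 : 0 ≤ MR' := (abs_nonneg _).trans (hMR' 0 0 h01)
  refine ⟨Mf + Mw + 3 * ML + 3 * MR + ML' + MR' + 1, by positivity, ?_⟩
  rintro ε ⟨hε, hε1⟩ x
  have hwd : Differentiable ℝ (fun z => what x z) :=
    (hw.differentiable one_ne_zero).comp ((differentiable_const x).prodMk differentiable_id)
  have hLd : Differentiable ℝ (fun z => psiL x z) :=
    (hpsiL.differentiable one_ne_zero).comp ((differentiable_const x).prodMk differentiable_id)
  have hRd : Differentiable ℝ (fun z => psiR x z) :=
    (hpsiR.differentiable one_ne_zero).comp ((differentiable_const x).prodMk differentiable_id)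
  have hs0 : 0 < Real.sqrt ε := Real.sqrt_pos.mpr hε
  have hss : Real.sqrt ε * Real.sqrt ε = ε := Real.mul_self_sqrt hε.le
  have hεp : ε ^ (-(1:ℝ)/2) = (Real.sqrt ε)⁻¹ := by
    rw [show (-(1:ℝ)/2) = -(1/2) by norm_num, Real.rpow_neg hε.le, ← Real.sqrt_eq_rpow]
  have hεs : ε ≤ Real.sqrt ε := by
    nlinarith [Real.sq_sqrt hε.le, Real.sqrt_nonneg ε, Real.sqrt_le_sqrt hε1, Real.sqrt_one]
  have hexp : 0 < Real.exp (-1 / Real.sqrt ε) := Real.exp_pos _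
  have hεi : 0 < ε⁻¹ := inv_pos.mpr hε
  set s := Real.sqrt ε with hsdef
  constructor
  · -- z = 0
    have hid : deriv (fun z => slPinnW1 ε f₂ what psiL psiR x z) 0 - f₂ x 0 / ε
        = Real.exp (-1 / s) *
          ((f₂ x 1 - ε * deriv (fun z' => what x z') 1) * ε⁻¹
            + (-2 + s⁻¹) * psiR x 0 + deriv (fun z' => psiR x z') 0) := by
      rw [(keyDeriv ε f₂ what psiL psiR x hwd hLd hRd 0).deriv, ← hsdef, hεp, ← hss]
      field_simp
      simp only [zero_div, neg_zero, sub_self, sub_zero, Real.exp_zero]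
      ring
    rw [hid, abs_mul, abs_of_pos hexp]
    have hsi : 0 ≤ s⁻¹ := (inv_pos.mpr hs0).le
    have hR := absBound ε s (f₂ x 1) (deriv (fun z' => what x z') 1) (psiR x 0)
      (deriv (fun z' => psiR x z') 0) Mf Mw MR MR' (-2 + s⁻¹) hε hε1 hεs hs0
      (hMf x 1 h11) (hMw x 1 h11) (hMR x 0 h01) (hMR' x 0 h01)
      (by rw [abs_le]; constructor <;> linarith)
    calc Real.exp (-1 / s) * |(f₂ x 1 - ε * deriv (fun z' => what x z') 1) * ε⁻¹
            + (-2 + s⁻¹) * psiR x 0 + deriv (fun z' => psiR x z') 0|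
        ≤ Real.exp (-1 / s) * ((Mf + Mw + 3 * MR + MR') * ε⁻¹) :=
          mul_le_mul_of_nonneg_left hR hexp.le
      _ ≤ (Mf + Mw + 3 * ML + 3 * MR + ML' + MR' + 1) * ε⁻¹ * Real.exp (-1 / s) := by
          nlinarith [mul_pos hεi hexp, hML0, hML'0]
  · -- z = 1
    have hid : deriv (fun z => slPinnW1 ε f₂ what psiL psiR x z) 1 - f₂ x 1 / ε
        = Real.exp (-1 / s) *
          ((f₂ x 0 - ε * deriv (fun z' => what x z') 0) * ε⁻¹
            + (2 - s⁻¹) * psiL x 1 + deriv (fun z' => psiL x z') 1) := by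
      rw [(keyDeriv ε f₂ what psiL psiR x hwd hLd hRd 1).deriv, ← hsdef, hεp, ← hss]
      field_simp
      simp only [zero_div, neg_zero, sub_self, sub_zero, Real.exp_zero]
      ring
    rw [hid, abs_mul, abs_of_pos hexp]
    have hsi : 0 ≤ s⁻¹ := (inv_pos.mpr hs0).le
    have hR := absBound ε s (f₂ x 0) (deriv (fun z' => what x z') 0) (psiL x 1)
      (deriv (fun z' => psiL x z') 1) Mf Mw ML ML' (2 - s⁻¹) hε hε1 hεs hs0
      (hMf x 0 h01) (hMw x 0 h01) (hML x 1 h11) (hML' x 1 h11)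
      (by rw [abs_le]; constructor <;> linarith)
    calc Real.exp (-1 / s) * |(f₂ x 0 - ε * deriv (fun z' => what x z') 0) * ε⁻¹
            + (2 - s⁻¹) * psiL x 1 + deriv (fun z' => psiL x z') 1|
        ≤ Real.exp (-1 / s) * ((Mf + Mw + 3 * ML + ML') * ε⁻¹) :=
          mul_le_mul_of_nonneg_left hR hexp.le
      _ ≤ (Mf + Mw + 3 * ML + 3 * MR + ML' + MR' + 1) * ε⁻¹ * Real.exp (-1 / s) := by
          nlinarith [mul_pos hεi hexp, hMR0, hMR'0]
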